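/- Let M be a minimum-cost MM between S and T and let (a, d) ∈ M with a ∈ S and d ∈ T. If a < d, then there do not exist b ∈ T and c ∈ S with a < b < c < d; if d < a, then there do not exist c ∈ S and b ∈ T with d < c < b < a. (Equivalently, every matched pair joins points of two consecutive maximal blocks of the partition of S ∪ T into maximal subsets alternating between S and T.) -/
import Mathlib


open Finset

/-- A many-to-many matching (MM) between point sets `S` and `T` on the real line:
a set of pairs `(s, t)` with `s ∈ S`, `t ∈ T`, covering every point of `S` and of `T`. -/
def IsMM (S T : Finset ℝ) (M : Finset (ℝ × ℝ)) : Prop :=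
  (∀ p ∈ M, p.1 ∈ S ∧ p.2 ∈ T) ∧
  (∀ s ∈ S, ∃ t, (s, t) ∈ M) ∧
  (∀ t ∈ T, ∃ s, (s, t) ∈ M)

/-- The cost of a matching: the sum of the distances of its pairs. -/
noncomputable def mmCost (M : Finset (ℝ × ℝ)) : ℝ := ∑ p ∈ M, |p.1 - p.2|

/-- A minimum-cost MM. -/
def IsMinMM (S T : Finset ℝ) (M : Finset (ℝ × ℝ)) : Prop :=
  IsMM S T M ∧ ∀ M' : Finset (ℝ × ℝ), IsMM S T M' → mmCost M ≤ mmCost M'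

lemma cost_insert_le (x : ℝ × ℝ) (A : Finset (ℝ × ℝ)) :
    mmCost (insert x A) ≤ |x.1 - x.2| + mmCost A := by
  unfold mmCost
  by_cases h : x ∈ A
  · rw [Finset.insert_eq_self.2 h]
    have := abs_nonneg (x.1 - x.2)
    linarith
  · rw [Finset.sum_insert h]

lemma cost_erase (x : ℝ × ℝ) (A : Finset (ℝ × ℝ)) (hx : x ∈ A) :
    mmCost (A.erase x) = mmCost A - |x.1 - x.2| := by
  unfold mmCost
  have := Finset.add_sum_erase A (fun p => |p.1 - p.2|) hx
  linarith

lemma key (S T : Finset ℝ) (M : Finset (ℝ × ℝ)) (hM : IsMinMM S T M)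
    (a d b c : ℝ) (ha : a ∈ S) (hd : d ∈ T) (hb : b ∈ T) (hc : c ∈ S)
    (had : (a, d) ∈ M) (hlt : |a - b| + |c - d| < |a - d|) : False := by
  set M' : Finset (ℝ × ℝ) := insert (a, b) (insert (c, d) (M.erase (a, d))) with hM'
  have hmm : IsMM S T M' := by
    refine ⟨?_, ?_, ?_⟩
    · intro p hp
      simp only [hM', Finset.mem_insert] at hp
      rcases hp with rfl | rfl | hp
      · exact ⟨ha, hb⟩
      · exact ⟨hc, hd⟩
      · exact hM.1.1 p (Finset.mem_of_mem_erase hp)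
    · intro s hs
      obtain ⟨t, ht⟩ := hM.1.2.1 s hs
      by_cases h : (s, t) = (a, d)
      · refine ⟨b, ?_⟩
        have : s = a := by simpa using congrArg Prod.fst h
        subst this
        simp [hM']
      · exact ⟨t, by simp [hM', Finset.mem_erase, h, ht]⟩
    · intro t ht
      obtain ⟨s, hst⟩ := hM.1.2.2 t ht
      by_cases h : (s, t) = (a, d)
      · refine ⟨c, ?_⟩
        have : t = d := by simpa using congrArg Prod.snd h
        subst this
        simp [hM']
      · exact ⟨s, by simp [hM', Finset.mem_erase, h, hst]⟩
  have hle := hM.2 M' hmm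
  have h1 : mmCost M' ≤ |a - b| + mmCost (insert (c, d) (M.erase (a, d))) :=
    cost_insert_le (a, b) _
  have h2 : mmCost (insert (c, d) (M.erase (a, d))) ≤ |c - d| + mmCost (M.erase (a, d)) :=
    cost_insert_le (c, d) _
  have h3 : mmCost (M.erase (a, d)) = mmCost M - |a - d| := cost_erase (a, d) M had
  linarith

/-- Every pair of a minimum-cost MM joins points of two consecutive maximal blocks:
if `(a, d) ∈ M` with `a < d` then there are no `b ∈ T`, `c ∈ S` with `a < b < c < d`;
if `d < a` then there are no `c ∈ S`, `b ∈ T` with `d < c < b < a`. -/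
theorem stmt_4 (S T : Finset ℝ) (hdisj : Disjoint S T) (hS : S.Nonempty) (hT : T.Nonempty)
    (M : Finset (ℝ × ℝ)) (hM : IsMinMM S T M)
    (a d : ℝ) (ha : a ∈ S) (hd : d ∈ T) (had : (a, d) ∈ M) :
    (a < d → ¬ ∃ b ∈ T, ∃ c ∈ S, a < b ∧ b < c ∧ c < d) ∧
    (d < a → ¬ ∃ c ∈ S, ∃ b ∈ T, d < c ∧ c < b ∧ b < a) := by
  constructor
  · rintro hlt ⟨b, hb, c, hc, h1, h2, h3⟩
    refine key S T M hM a d b c ha hd hb hc had ?_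
    rw [abs_of_neg (by linarith : a - b < 0), abs_of_neg (by linarith : c - d < 0),
      abs_of_neg (by linarith : a - d < 0)]
    linarith
  · rintro hlt ⟨c, hc, b, hb, h1, h2, h3⟩
    refine key S T M hM a d b c ha hd hb hc had ?_
    rw [abs_of_pos (by linarith : 0 < a - b), abs_of_pos (by linarith : 0 < c - d),
      abs_of_pos (by linarith : 0 < a - d)]
    linarith
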